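/- Let (r,ρ) ∈ 𝒩𝒞, let M = varprojlim(M_{r,ρ}, σ_{r,ρ}) ⊆ (M_{r,ρ})^ℕ, and let 𝐎 ∈ M be the point all of whose coordinates are the zero sequence (0,0,0,…). For a point x = (x^1, x^2, x^3, …) with each x^k ∈ [0,1]^ℕ, the following are equivalent: (i) x ∈ M \ {𝐎}; (ii) there exist t ∈ (0,1] and sequences a = (a_1,a_2,a_3,…) ∈ {r,ρ}^ℕ and c = (c_1,c_2,c_3,…) ∈ {r,ρ}^ℕ such that (a) for each positive integer n, (a_n·a_{n-1}·…·a_1)·t ≤ 1 and t/(c_n·c_{n-1}·…·c_1) ≤ 1; (b) x^1 = (t, a_1·t, a_2a_1·t, a_3a_2a_1·t, …); and (c) for each integer k ≥ 2, x^k = (t/(c_{k-1}c_{k-2}⋯c_1), t/(c_{k-2}⋯c_1), …, t/(c_2c_1), t/c_1, t, a_1·t, a_2a_1·t, …). -/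

import Mathlib

/-- `(r, ρ) ∈ 𝒩𝒞`: `0 < r < 1 < ρ` and `r^k = ρ^ℓ` only for `k = ℓ = 0`. -/
def NC (r ρ : ℝ) : Prop :=
  0 < r ∧ r < 1 ∧ 1 < ρ ∧ ∀ k l : ℤ, r ^ k = ρ ^ l ↔ k = 0 ∧ l = 0

/-- The Mahavier product `M_{r,ρ} ⊆ [0,1]^ℕ`. -/
def Mset (r ρ : ℝ) : Set (ℕ → ℝ) :=
  {x | (∀ i, x i ∈ Set.Icc (0:ℝ) 1) ∧ ∀ i, x (i + 1) = r * x i ∨ x (i + 1) = ρ * x i}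

/-- The shift map `σ_{r,ρ}` on `M_{r,ρ}`. -/
def shiftM (r ρ : ℝ) (x : Mset r ρ) : Mset r ρ :=
  ⟨fun i => x.1 (i + 1), fun i => x.2.1 (i + 1), fun i => x.2.2 (i + 1)⟩

/-- Characterization of the points of `M = varprojlim(M_{r,ρ}, σ_{r,ρ})` different from the
top `𝐎 = ((0,0,…),(0,0,…),…)`: `x = (x¹, x², x³, …)` (with `x k i = x (k+1) (i+1)` encoding
`xᵏ = σ_{r,ρ}(x^{k+1})`) is such a point iff there are `t ∈ (0,1]` and sequences
`a, c ∈ {r,ρ}^ℕ` with all the partial products `(aₙ⋯a₁)·t ≤ 1` and `t/(cₙ⋯c₁) ≤ 1`, such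
that `x k i = t/(c_{k-i}⋯c₁)` for `i < k` and `x k i = (a_{i-k}⋯a₁)·t` for `i ≥ k`. -/
theorem stmt13 (r ρ : ℝ) (h : NC r ρ) (x : ℕ → ℕ → ℝ) :
    ((∀ k, x k ∈ Mset r ρ) ∧ (∀ k i, x k i = x (k + 1) (i + 1)) ∧
        x ≠ fun _ _ => (0:ℝ)) ↔
      ∃ t : ℝ, t ∈ Set.Ioc (0:ℝ) 1 ∧ ∃ a c : ℕ → ℝ,
        (∀ n, a n = r ∨ a n = ρ) ∧ (∀ n, c n = r ∨ c n = ρ) ∧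
        (∀ n : ℕ, 1 ≤ n → (∏ i ∈ Finset.range n, a i) * t ≤ 1 ∧
          t / (∏ i ∈ Finset.range n, c i) ≤ 1) ∧
        (∀ k i : ℕ, x k i =
          if i < k then t / (∏ j ∈ Finset.range (k - i), c j)
          else (∏ j ∈ Finset.range (i - k), a j) * t) := by
  obtain ⟨hr0, hr1, hρ1, -⟩ := h
  have hρ0 : (0:ℝ) < ρ := lt_trans one_pos hρ1
  constructor
  · rintro ⟨hM, hcomp, hne⟩
    have hbd : ∀ k i, x k i ∈ Set.Icc (0:ℝ) 1 := fun k => (hM k).1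
    have hstep : ∀ k i, x k (i+1) = r * x k i ∨ x k (i+1) = ρ * x k i :=
      fun k => (hM k).2
    have hshift : ∀ m k i, x k i = x (k + m) (i + m) := by
      intro m
      induction m with
      | zero => intro k i; rfl
      | succ m ih =>
        intro k i
        calc x k i = x (k + m) (i + m) := ih k i
        _ = x (k + m + 1) (i + m + 1) := hcomp _ _
    have hzseq : ∀ k n, x k 0 = 0 ↔ x k n = 0 := by
      intro k n
      induction n with
      | zero => exact Iff.rfl
      | succ n ih =>
        rw [ih]
        rcases hstep k n with h' | h' <;> rw [h'] <;>
          simp [mul_eq_zero, hr0.ne', hρ0.ne']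
    have ht0 : 0 < x 0 0 := by
      rcases (hbd 0 0).1.lt_or_eq with h' | h'
      · exact h'
      · exfalso
        apply hne
        funext k i
        have h00 : x 0 0 = 0 := h'.symm
        show x k i = 0
        rcases le_or_gt k i with hki | hki
        · have hx : x 0 (i - k) = x k i := by
            have := hshift k 0 (i - k)
            rwa [Nat.zero_add, Nat.sub_add_cancel hki] at this
          rw [← hx]
          exact (hzseq 0 (i - k)).mp h00
        · have hx : x (k - i) 0 = x k i := by
            have := hshift i (k - i) 0
            rwa [Nat.sub_add_cancel hki.le, Nat.zero_add] at this
          have hkk : x (k - i) (k - i) = 0 := by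
            have := hshift (k - i) 0 0
            simp only [Nat.zero_add] at this
            rw [← this]; exact h00
          rw [← hx]
          exact (hzseq (k - i) (k - i)).mpr hkk
    have key : ∃ a : ℕ → ℝ, (∀ n, a n = r ∨ a n = ρ) ∧
        ∀ n, x 0 (n+1) = a n * x 0 n := by
      classical
      refine ⟨fun n => if x 0 (n+1) = r * x 0 n then r else ρ, fun n => ?_, fun n => ?_⟩
      · by_cases h' : x 0 (n+1) = r * x 0 n
        · left; simp [if_pos h']
        · right; simp [if_neg h']
      · by_cases h' : x 0 (n+1) = r * x 0 n
        · simp only [if_pos h']; exact h'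
        · simp only [if_neg h']
          rcases hstep 0 n with h'' | h''
          · exact absurd h'' h'
          · exact h''
    obtain ⟨a, ha, hastep⟩ := key
    have keyc : ∃ c : ℕ → ℝ, (∀ n, c n = r ∨ c n = ρ) ∧
        ∀ k, x k 0 = c k * x (k+1) 0 := by
      classical
      refine ⟨fun k => if x (k+1) 1 = r * x (k+1) 0 then r else ρ, fun k => ?_, fun k => ?_⟩
      · by_cases h' : x (k+1) 1 = r * x (k+1) 0
        · left; simp [if_pos h']
        · right; simp [if_neg h']
      · have h01 : x k 0 = x (k+1) 1 := hcomp k 0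
        by_cases h' : x (k+1) 1 = r * x (k+1) 0
        · simp only [if_pos h']; rw [h01]; exact h'
        · simp only [if_neg h']; rw [h01]
          rcases hstep (k+1) 0 with h'' | h''
          · exact absurd h'' h'
          · exact h''
    obtain ⟨c, hc, hcstep⟩ := keyc
    have hcne : ∀ k, c k ≠ 0 := by
      intro k; rcases hc k with h' | h' <;> rw [h'] <;> positivity
    have haform : ∀ n, x 0 n = (∏ i ∈ Finset.range n, a i) * x 0 0 := by
      intro n
      induction n with
      | zero => simp
      | succ n ih => rw [hastep n, ih, Finset.prod_range_succ]; ring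
    have hcform : ∀ k, x k 0 = x 0 0 / (∏ i ∈ Finset.range k, c i) := by
      intro k
      induction k with
      | zero => simp
      | succ k ih =>
        rw [Finset.prod_range_succ, ← div_div, ← ih, eq_div_iff (hcne k)]
        linear_combination -hcstep k
    refine ⟨x 0 0, ⟨ht0, (hbd 0 0).2⟩, a, c, ha, hc, ?_, ?_⟩
    · intro n _
      constructor
      · rw [← haform]; exact (hbd 0 n).2
      · rw [← hcform]; exact (hbd n 0).2
    · intro k i
      rcases lt_or_ge i k with hik | hik
      · rw [if_pos hik, ← hcform]
        have := hshift i (k - i) 0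
        rw [Nat.sub_add_cancel hik.le, Nat.zero_add] at this
        exact this.symm
      · rw [if_neg (not_lt.mpr hik), ← haform]
        have := hshift k 0 (i - k)
        rw [Nat.zero_add, Nat.sub_add_cancel hik] at this
        exact this.symm
  · rintro ⟨t, ⟨ht0, ht1⟩, a, c, ha, hc, hineq, hform⟩
    have hap : ∀ n, 0 < a n := by
      intro n; rcases ha n with h' | h' <;> rw [h'] <;> linarith
    have hcp : ∀ n, 0 < c n := by
      intro n; rcases hc n with h' | h' <;> rw [h'] <;> linarith
    have hPa : ∀ n, 0 < ∏ i ∈ Finset.range n, a i :=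
      fun n => Finset.prod_pos (fun i _ => hap i)
    have hPc : ∀ n, 0 < ∏ i ∈ Finset.range n, c i :=
      fun n => Finset.prod_pos (fun i _ => hcp i)
    refine ⟨?_, ?_, ?_⟩
    · intro k
      refine ⟨fun i => ?_, fun i => ?_⟩
      · rw [hform k i]
        split_ifs with hik
        · refine ⟨(div_pos ht0 (hPc _)).le, ?_⟩
          exact (hineq (k - i) (by omega)).2
        · refine ⟨(mul_pos (hPa _) ht0).le, ?_⟩
          rcases Nat.lt_or_ge k i with h' | h'
          · exact (hineq (i - k) (by omega)).1
          · have h0 : i - k = 0 := by omega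
            rw [h0]; simpa using ht1
      · rcases lt_or_ge i k with hik | hik
        · obtain ⟨m, hm⟩ : ∃ m, k - i = m + 1 := ⟨k - i - 1, by omega⟩
          have h1 : x k (i+1) = t / ∏ j ∈ Finset.range m, c j := by
            rw [hform]
            split_ifs with h'
            · have e : k - (i+1) = m := by omega
              rw [e]
            · have e3 : m = 0 := by omega
              have e4 : i + 1 - k = 0 := by omega
              rw [e3, e4]; simp
          have h2 : x k i = t / ((∏ j ∈ Finset.range m, c j) * c m) := by
            rw [hform, if_pos hik, hm, Finset.prod_range_succ]
          have hkey : x k (i+1) = c m * x k i := by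
            have hP := (hPc m).ne'
            have hcm := (hcp m).ne'
            rw [h1, h2]
            field_simp
          rcases hc m with h' | h'
          · left; rw [hkey, h']
          · right; rw [hkey, h']
        · have hkey : x k (i+1) = a (i - k) * x k i := by
            rw [hform, hform, if_neg (by omega : ¬ i + 1 < k), if_neg (not_lt.mpr hik)]
            have e : i + 1 - k = (i - k) + 1 := by omega
            rw [e, Finset.prod_range_succ]
            ring
          rcases ha (i - k) with h' | h'
          · left; rw [hkey, h']
          · right; rw [hkey, h']
    · intro k i
      rw [hform, hform]
      rcases lt_or_ge i k with h' | h'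
      · rw [if_pos h', if_pos (by omega : i + 1 < k + 1)]
        have e : k + 1 - (i + 1) = k - i := by omega
        rw [e]
      · rw [if_neg (not_lt.mpr h'), if_neg (by omega : ¬ i + 1 < k + 1)]
        have e : i + 1 - (k + 1) = i - k := by omega
        rw [e]
    · intro heq
      have h00 : x 0 0 = 0 := by rw [heq]
      rw [hform 0 0] at h00
      simp at h00
      linarith
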